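/- Let n ≥ 3, L ⊆ ℝ^n be the Lorentz (second order) cone, and A a symmetric n×n matrix with exactly two distinct eigenvalues λ < μ with λ of multiplicity one. Then q_A(x) = ⟨Ax,x⟩ is spherically quasi-convex on S^{n-1} ∩ int(L) if and only if L contains an eigenvector of A corresponding to λ. -/

import Mathlib

open RealInnerProductSpace

noncomputable def geo {n : ℕ} (x y : EuclideanSpace ℝ (Fin n)) (t : ℝ) :
    EuclideanSpace ℝ (Fin n) :=
  (Real.cos (t * Real.arccos ⟪x, y⟫) -
      ⟪x, y⟫ * Real.sin (t * Real.arccos ⟪x, y⟫) / Real.sqrt (1 - ⟪x, y⟫ ^ 2)) • x +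
    (Real.sin (t * Real.arccos ⟪x, y⟫) / Real.sqrt (1 - ⟪x, y⟫ ^ 2)) • y

def IsMinimalGeodesic {n : ℕ} (γ : ℝ → EuclideanSpace ℝ (Fin n)) : Prop :=
  (∃ x y : EuclideanSpace ℝ (Fin n), ‖x‖ = 1 ∧ ‖y‖ = 1 ∧ y ≠ x ∧ y ≠ -x ∧
      ∀ t, γ t = geo x y t) ∨
  (∃ x v : EuclideanSpace ℝ (Fin n), ‖x‖ = 1 ∧ ‖v‖ = 1 ∧ ⟪x, v⟫ = 0 ∧
      ∀ t, γ t = Real.cos (Real.pi * t) • x + Real.sin (Real.pi * t) • v)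

def SphericallyConvex {n : ℕ} (S : Set (EuclideanSpace ℝ (Fin n))) : Prop :=
  ∀ γ : ℝ → EuclideanSpace ℝ (Fin n), IsMinimalGeodesic γ → γ 0 ∈ S → γ 1 ∈ S →
    ∀ t ∈ Set.Icc (0 : ℝ) 1, γ t ∈ S

def SphQuasiconvexOn {n : ℕ} (S : Set (EuclideanSpace ℝ (Fin n)))
    (f : EuclideanSpace ℝ (Fin n) → ℝ) : Prop :=
  ∀ γ : ℝ → EuclideanSpace ℝ (Fin n), IsMinimalGeodesic γ →
    (∀ t ∈ Set.Icc (0 : ℝ) 1, γ t ∈ S) →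
    ∀ t ∈ Set.Icc (0 : ℝ) 1, f (γ t) ≤ max (f (γ 0)) (f (γ 1))

/-! ### Auxiliary lemmas -/

noncomputable def auxP {n : ℕ} (i0 : Fin n) (x : EuclideanSpace ℝ (Fin n)) :
    EuclideanSpace ℝ (Fin n) :=
  WithLp.toLp 2 (fun i => if i = i0 then 0 else x i)

lemma auxP_apply {n : ℕ} (i0 : Fin n) (x : EuclideanSpace ℝ (Fin n)) (i : Fin n) :
    auxP i0 x i = if i = i0 then 0 else x i := rfl

lemma auxP_smul {n : ℕ} (i0 : Fin n) (a : ℝ) (x : EuclideanSpace ℝ (Fin n)) :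
    auxP i0 (a • x) = a • auxP i0 x := by
  ext i
  simp only [auxP_apply, PiLp.smul_apply, smul_eq_mul]
  split <;> simp

lemma auxP_add {n : ℕ} (i0 : Fin n) (x y : EuclideanSpace ℝ (Fin n)) :
    auxP i0 (x + y) = auxP i0 x + auxP i0 y := by
  ext i
  simp only [auxP_apply, PiLp.add_apply]
  split <;> simp

lemma auxP_idem {n : ℕ} (i0 : Fin n) (x : EuclideanSpace ℝ (Fin n)) :
    auxP i0 (auxP i0 x) = auxP i0 x := by
  ext i
  simp only [auxP_apply]
  split <;> simp

lemma aux_norm_P_sq {n : ℕ} (i0 : Fin n) (x : EuclideanSpace ℝ (Fin n)) :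
    ‖auxP i0 x‖ ^ 2 = ∑ i ∈ Finset.univ.erase i0, x i ^ 2 := by
  rw [EuclideanSpace.norm_eq, Real.sq_sqrt (by positivity),
    ← Finset.sum_erase_add _ _ (Finset.mem_univ i0)]
  have h0 : ‖auxP i0 x i0‖ ^ 2 = 0 := by simp [auxP_apply]
  rw [h0, add_zero]
  refine Finset.sum_congr rfl fun i hi => ?_
  rw [auxP_apply, if_neg (Finset.ne_of_mem_erase hi), Real.norm_eq_abs, sq_abs]

lemma aux_sqrt_sum_eq {n : ℕ} (i0 : Fin n) (x : EuclideanSpace ℝ (Fin n)) :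
    Real.sqrt (∑ i ∈ Finset.univ.erase i0, x i ^ 2) = ‖auxP i0 x‖ := by
  rw [← aux_norm_P_sq, Real.sqrt_sq (norm_nonneg _)]

lemma aux_inner_split {n : ℕ} (i0 : Fin n) (u x : EuclideanSpace ℝ (Fin n)) :
    ⟪u, x⟫ = u i0 * x i0 + ⟪auxP i0 u, auxP i0 x⟫ := by
  simp only [PiLp.inner_apply, RCLike.inner_apply, starRingEnd_apply, star_trivial]
  have h1 : ∑ i, auxP i0 u i * auxP i0 x i = ∑ i ∈ Finset.univ.erase i0, u i * x i := by
    rw [← Finset.sum_erase_add _ _ (Finset.mem_univ i0)]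
    have h2 : auxP i0 u i0 * auxP i0 x i0 = 0 := by simp [auxP_apply]
    rw [h2, add_zero]
    exact Finset.sum_congr rfl fun i hi => by
      simp [auxP_apply, Finset.ne_of_mem_erase hi]
  rw [show (∑ i, x i * u i) = ∑ i, u i * x i from Finset.sum_congr rfl fun i _ => mul_comm _ _,
    show (∑ i, auxP i0 x i * auxP i0 u i) = ∑ i, auxP i0 u i * auxP i0 x i from
      Finset.sum_congr rfl fun i _ => mul_comm _ _]
  rw [h1, ← Finset.sum_erase_add _ (fun i => u i * x i) (Finset.mem_univ i0), add_comm]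

lemma aux_pos_inner {n : ℕ} {i0 : Fin n} {u x : EuclideanSpace ℝ (Fin n)}
    (hu : ‖auxP i0 u‖ ≤ u i0) (hu0 : u ≠ 0) (hx : ‖auxP i0 x‖ < x i0) : 0 < ⟪u, x⟫ := by
  have hui : 0 < u i0 := by
    rcases lt_or_eq_of_le (le_trans (norm_nonneg _) hu) with h | h
    · exact h
    · exfalso
      apply hu0
      have hP : auxP i0 u = 0 := by
        have : ‖auxP i0 u‖ = 0 := le_antisymm (h ▸ hu) (norm_nonneg _)
        exact norm_eq_zero.mp this
      ext i
      by_cases hi : i = i0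
      · rw [hi]; exact h.symm
      · have := congrArg (fun v : EuclideanSpace ℝ (Fin n) => v i) hP
        simpa [auxP_apply, if_neg hi] using this
  have hcs := abs_real_inner_le_norm (auxP i0 u) (auxP i0 x)
  have hxn : (0:ℝ) ≤ ‖auxP i0 x‖ := norm_nonneg _
  have := aux_inner_split i0 u x
  nlinarith [abs_le.mp hcs, mul_le_mul_of_nonneg_right hu hxn]

lemma aux_continuous_normP {n : ℕ} (i0 : Fin n) :
    Continuous fun x : EuclideanSpace ℝ (Fin n) => ‖auxP i0 x‖ := by
  have : Continuous fun x : EuclideanSpace ℝ (Fin n) => auxP i0 x := by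
    apply (PiLp.continuous_toLp _ _).comp
    apply continuous_pi
    intro i
    simp only [auxP_apply]
    split
    · exact continuous_const
    · exact (EuclideanSpace.proj i).continuous
  exact this.norm

lemma aux_interior_lorentz {n : ℕ} (i0 : Fin n) :
    interior {x : EuclideanSpace ℝ (Fin n) | ‖auxP i0 x‖ ≤ x i0}
      = {x : EuclideanSpace ℝ (Fin n) | ‖auxP i0 x‖ < x i0} := by
  apply le_antisymm
  · intro x hx
    rw [mem_interior_iff_mem_nhds, Metric.mem_nhds_iff] at hx
    obtain ⟨ε, hε, hball⟩ := hx
    have hy : x - (ε/2) • EuclideanSpace.single i0 (1:ℝ)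
        ∈ {x : EuclideanSpace ℝ (Fin n) | ‖auxP i0 x‖ ≤ x i0} := by
      apply hball
      rw [Metric.mem_ball, dist_eq_norm]
      have h3 : x - (ε/2) • EuclideanSpace.single i0 (1:ℝ) - x
          = -((ε/2) • EuclideanSpace.single i0 (1:ℝ)) := by abel
      rw [h3, norm_neg, norm_smul, EuclideanSpace.norm_single]
      simp only [norm_one, mul_one, Real.norm_eq_abs]
      rw [abs_of_pos (by linarith)]
      linarith
    have hPy : auxP i0 (x - (ε/2) • EuclideanSpace.single i0 (1:ℝ)) = auxP i0 x := by
      ext i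
      simp only [auxP_apply]
      split
      · rfl
      · rename_i hi
        simp [EuclideanSpace.single_apply, hi]
    have hyi : (x - (ε/2) • EuclideanSpace.single i0 (1:ℝ)) i0 = x i0 - ε/2 := by
      simp [EuclideanSpace.single_apply]
    rw [Set.mem_setOf_eq, hPy, hyi] at hy
    have : ‖auxP i0 x‖ < x i0 := by linarith
    exact this
  · have h1 : Continuous fun x : EuclideanSpace ℝ (Fin n) => x i0 :=
      (EuclideanSpace.proj i0).continuous
    exact interior_maximal
      (fun x hx => (le_of_lt (hx : ‖auxP i0 x‖ < x i0) : ‖auxP i0 x‖ ≤ x i0))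
      (isOpen_lt (aux_continuous_normP i0) h1)

lemma aux_sin_add_sin {a b : ℝ} (ha : 0 ≤ a) (ha' : a ≤ Real.pi) (hb : 0 ≤ b)
    (hb' : b ≤ Real.pi) : Real.sin (a + b) ≤ Real.sin a + Real.sin b := by
  rw [Real.sin_add]
  nlinarith [Real.sin_nonneg_of_nonneg_of_le_pi ha ha', Real.sin_nonneg_of_nonneg_of_le_pi hb hb',
    Real.cos_le_one a, Real.cos_le_one b]

lemma aux_inner_gt_neg_one {n : ℕ} {x y : EuclideanSpace ℝ (Fin n)} (hx : ‖x‖ = 1)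
    (hy : ‖y‖ = 1) (hyx' : y ≠ -x) : -1 < ⟪x, y⟫ := by
  have hny : ‖-y‖ = 1 := by rw [norm_neg]; exact hy
  have hne : x ≠ -y := by
    intro h
    apply hyx'
    rw [h, neg_neg]
  have := (inner_lt_one_iff_real_of_norm_eq_one hx hny).mpr hne
  rw [inner_neg_right] at this
  linarith

lemma aux_inner_lt_one {n : ℕ} {x y : EuclideanSpace ℝ (Fin n)} (hx : ‖x‖ = 1) (hy : ‖y‖ = 1)
    (hyx : y ≠ x) : ⟪x, y⟫ < 1 :=
  (inner_lt_one_iff_real_of_norm_eq_one hx hy).mpr (Ne.symm hyx)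

lemma geo_zero {n : ℕ} (x y : EuclideanSpace ℝ (Fin n)) : geo x y 0 = x := by
  simp [geo]

lemma geo_one {n : ℕ} {x y : EuclideanSpace ℝ (Fin n)} (hx : ‖x‖ = 1) (hy : ‖y‖ = 1)
    (hyx : y ≠ x) (hyx' : y ≠ -x) : geo x y 1 = y := by
  have h1 : ⟪x, y⟫ < 1 := aux_inner_lt_one hx hy hyx
  have h2 : -1 < ⟪x, y⟫ := aux_inner_gt_neg_one hx hy hyx'
  have hs : 0 < Real.sqrt (1 - ⟪x, y⟫ ^ 2) := Real.sqrt_pos.mpr (by nlinarith)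
  simp only [geo, one_mul, Real.sin_arccos, Real.cos_arccos h2.le h1.le]
  rw [mul_div_assoc, div_self (ne_of_gt hs)]
  simp

lemma geo_coeff {n : ℕ} {x y : EuclideanSpace ℝ (Fin n)} (hx : ‖x‖ = 1) (hy : ‖y‖ = 1)
    (hyx : y ≠ x) (hyx' : y ≠ -x) {t : ℝ} (ht0 : 0 ≤ t) (ht1 : t ≤ 1) :
    ∃ a b : ℝ, 0 ≤ a ∧ 0 ≤ b ∧ 1 ≤ a + b ∧ a ^ 2 + b ^ 2 + 2 * a * b * ⟪x, y⟫ = 1 ∧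
      geo x y t = a • x + b • y := by
  have h1 : ⟪x, y⟫ < 1 := aux_inner_lt_one hx hy hyx
  have h2 : -1 < ⟪x, y⟫ := aux_inner_gt_neg_one hx hy hyx'
  set c : ℝ := ⟪x, y⟫ with hc
  set θ : ℝ := Real.arccos c with hθ
  set s : ℝ := Real.sqrt (1 - c ^ 2) with hsdef
  have hθpos : 0 < θ := Real.arccos_pos.mpr h1
  have hθpi : θ ≤ Real.pi := Real.arccos_le_pi c
  have hs : 0 < s := Real.sqrt_pos.mpr (by nlinarith)
  have hsθ : Real.sin θ = s := Real.sin_arccos c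
  have hcθ : Real.cos θ = c := Real.cos_arccos h2.le h1.le
  have htθ0 : 0 ≤ t * θ := mul_nonneg ht0 hθpos.le
  have htθθ : t * θ ≤ θ := by nlinarith
  have htθπ : t * θ ≤ Real.pi := htθθ.trans hθpi
  have hsin : 0 ≤ Real.sin (t * θ) := Real.sin_nonneg_of_nonneg_of_le_pi htθ0 htθπ
  refine ⟨Real.cos (t * θ) - c * Real.sin (t * θ) / s, Real.sin (t * θ) / s,
    ?_, div_nonneg hsin hs.le, ?_, ?_, rfl⟩
  · have ha : Real.cos (t * θ) - c * Real.sin (t * θ) / s = Real.sin (θ - t * θ) / s := by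
      rw [Real.sin_sub, hsθ, hcθ]
      field_simp
    rw [ha]
    exact div_nonneg (Real.sin_nonneg_of_nonneg_of_le_pi (by linarith) (by linarith)) hs.le
  · have ha : Real.cos (t * θ) - c * Real.sin (t * θ) / s = Real.sin (θ - t * θ) / s := by
      rw [Real.sin_sub, hsθ, hcθ]
      field_simp
    rw [ha, ← add_div, le_div_iff₀ hs, one_mul, ← hsθ]
    have := aux_sin_add_sin (a := θ - t * θ) (b := t * θ) (by linarith) (by linarith) htθ0 htθπ
    simpa using this
  · have hb2 : (Real.sin (t * θ) / s) ^ 2 * (1 - c ^ 2) = Real.sin (t * θ) ^ 2 := by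
      have hne : (1:ℝ) - c ^ 2 ≠ 0 := by nlinarith
      rw [div_pow, hsdef, Real.sq_sqrt (by nlinarith : (0:ℝ) ≤ 1 - c ^ 2),
        div_mul_eq_mul_div, mul_div_assoc, div_self hne, mul_one]
    have hpyth := Real.sin_sq_add_cos_sq (t * θ)
    have ha' : Real.cos (t * θ) - c * Real.sin (t * θ) / s
        = Real.cos (t * θ) - c * (Real.sin (t * θ) / s) := by ring
    rw [ha']
    linear_combination hb2 + hpyth

lemma aux_norm_comb {n : ℕ} {x y : EuclideanSpace ℝ (Fin n)} (hx : ‖x‖ = 1) (hy : ‖y‖ = 1)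
    {a b : ℝ} (h : a ^ 2 + b ^ 2 + 2 * a * b * ⟪x, y⟫ = 1) : ‖a • x + b • y‖ = 1 := by
  have hxx : ⟪x, x⟫ = 1 := by rw [real_inner_self_eq_norm_sq, hx]; norm_num
  have hyy : ⟪y, y⟫ = 1 := by rw [real_inner_self_eq_norm_sq, hy]; norm_num
  have h2 : ‖a • x + b • y‖ ^ 2 = 1 := by
    rw [← real_inner_self_eq_norm_sq, inner_add_add_self]
    simp only [real_inner_smul_left, real_inner_smul_right]
    rw [hxx, hyy]
    linear_combination h + a * b * real_inner_comm x y
  rw [← Real.sqrt_sq (norm_nonneg (a • x + b • y)), h2, Real.sqrt_one]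

lemma aux_main_ineq (mu lam a b P1 Q1 : ℝ) (hlt : lam < mu) (ha : 0 ≤ a) (hb : 0 ≤ b)
    (hab : 1 ≤ a + b) (hp : 0 < P1) (hq : 0 < Q1) :
    mu * 1 ^ 2 - (mu - lam) * (a * P1 + b * Q1) ^ 2
      ≤ max (mu * 1 ^ 2 - (mu - lam) * P1 ^ 2) (mu * 1 ^ 2 - (mu - lam) * Q1 ^ 2) := by
  rcases le_total P1 Q1 with h | h
  · apply le_max_of_le_left
    have h1 : P1 ≤ a * P1 + b * Q1 := by nlinarith
    have h2 : P1 ^ 2 ≤ (a * P1 + b * Q1) ^ 2 := by nlinarith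
    nlinarith
  · apply le_max_of_le_right
    have h1 : Q1 ≤ a * P1 + b * Q1 := by nlinarith
    have h2 : Q1 ^ 2 ≤ (a * P1 + b * Q1) ^ 2 := by nlinarith
    nlinarith

lemma aux_lt_one {c0 s0 : ℝ} (hc0 : 0 < c0) (hs0 : 0 < s0) (hcs : c0 ^ 2 + s0 ^ 2 = 1) :
    -1 < c0 ^ 2 - s0 ^ 2 ∧ c0 ^ 2 - s0 ^ 2 < 1 := by
  constructor <;> nlinarith [pow_pos hc0 2, pow_pos hs0 2]

lemma aux_abs_bound {a b s0 c0 : ℝ} (ha : 0 ≤ a) (hb : 0 ≤ b) (hab : 1 ≤ a + b)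
    (hs0 : 0 < s0) (hsc : s0 < c0) : |a * s0 - b * s0| < (a + b) * c0 := by
  have h1 : |a * s0 - b * s0| ≤ (a + b) * s0 := by
    rw [abs_le]
    constructor <;> nlinarith [mul_nonneg ha hs0.le, mul_nonneg hb hs0.le]
  have h2 : (a + b) * s0 < (a + b) * c0 := by nlinarith
  linarith

lemma aux_prod_neg {aa bb c0 s0 : ℝ} (h : |aa| * c0 < bb * s0) (hc0 : 0 < c0)
    (hs0 : 0 < s0) (hbb : 0 < bb) : (aa * c0 + bb * s0) * (aa * c0 - bb * s0) < 0 := by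
  have hsq : (aa * c0) ^ 2 < (bb * s0) ^ 2 := by
    have h0 : 0 ≤ |aa| * c0 := mul_nonneg (abs_nonneg aa) hc0.le
    have : (aa * c0) ^ 2 = (|aa| * c0) ^ 2 := by rw [mul_pow, mul_pow, sq_abs]
    nlinarith
  nlinarith

lemma aux_one_sub_sq {c : ℝ} (h1 : -1 < c) (h2 : c < 1) : 0 < 1 - c ^ 2 := by nlinarith

lemma aux_sign_neg {p q : ℝ} (h : p * q < 0) (hp : p < 0) : 0 < q := by nlinarith

lemma aux_sign_pos {p q : ℝ} (h : p * q < 0) (hp : 0 < p) : q < 0 := by nlinarith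

lemma aux_fx_lt {mu lam p : ℝ} (hlt : lam < mu) (hp : p ≠ 0) :
    mu * 1 ^ 2 - (mu - lam) * p ^ 2 < mu := by
  have := mul_self_pos.mpr hp
  nlinarith

theorem stmt18 (n : ℕ) (hn : 3 ≤ n)
    (L : Set (EuclideanSpace ℝ (Fin n)))
    (hL : L = {x | Real.sqrt (∑ i ∈ Finset.univ.erase (⟨0, by omega⟩ : Fin n), x i ^ 2)
        ≤ x (⟨0, by omega⟩ : Fin n)})
    (A : EuclideanSpace ℝ (Fin n) →ₗ[ℝ] EuclideanSpace ℝ (Fin n))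
    (hsymm : ∀ x y, ⟪A x, y⟫ = ⟪x, A y⟫)
    (lam mu : ℝ) (hlt : lam < mu)
    (v1 : EuclideanSpace ℝ (Fin n)) (hv1 : ‖v1‖ = 1) (heig : A v1 = lam • v1)
    (hrest : ∀ x, ⟪v1, x⟫ = 0 → A x = mu • x) :
    SphQuasiconvexOn
        (Metric.sphere (0 : EuclideanSpace ℝ (Fin n)) 1 ∩ interior L)
        (fun x => ⟪A x, x⟫) ↔
      (∃ w ∈ L, w ≠ 0 ∧ A w = lam • w) := by
  classical
  have h0n : 0 < n := by omega
  set i0 : Fin n := ⟨0, h0n⟩ with hi0def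
  have hLiff : ∀ x : EuclideanSpace ℝ (Fin n), x ∈ L ↔ ‖auxP i0 x‖ ≤ x i0 := by
    intro x
    rw [hL, Set.mem_setOf_eq, aux_sqrt_sum_eq]
  have hLeq : L = {x : EuclideanSpace ℝ (Fin n) | ‖auxP i0 x‖ ≤ x i0} := Set.ext hLiff
  have hIntEq : interior L = {x : EuclideanSpace ℝ (Fin n) | ‖auxP i0 x‖ < x i0} := by
    rw [hLeq, aux_interior_lorentz]
  have hv1v1 : ⟪v1, v1⟫ = 1 := by rw [real_inner_self_eq_norm_sq, hv1]; norm_num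
  have hA : ∀ z : EuclideanSpace ℝ (Fin n),
      A z = mu • z + (lam - mu) • (⟪v1, z⟫ • v1) := by
    intro z
    have hperp : ⟪v1, z - ⟪v1, z⟫ • v1⟫ = 0 := by
      rw [inner_sub_right, real_inner_smul_right, hv1v1]
      ring
    have h := hrest _ hperp
    have hz : z = ⟪v1, z⟫ • v1 + (z - ⟪v1, z⟫ • v1) := by abel
    calc A z = A (⟪v1, z⟫ • v1) + A (z - ⟪v1, z⟫ • v1) := by rw [← map_add, ← hz]
      _ = ⟪v1, z⟫ • (lam • v1) + mu • (z - ⟪v1, z⟫ • v1) := by rw [map_smul, heig, h]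
      _ = mu • z + (lam - mu) • (⟪v1, z⟫ • v1) := by module
  have hquad : ∀ z : EuclideanSpace ℝ (Fin n),
      ⟪A z, z⟫ = mu * ‖z‖ ^ 2 - (mu - lam) * ⟪v1, z⟫ ^ 2 := by
    intro z
    rw [hA z, inner_add_left, real_inner_smul_left, real_inner_smul_left, real_inner_smul_left,
      real_inner_self_eq_norm_sq]
    ring
  have hmlne : mu - lam ≠ 0 := ne_of_gt (by linarith)
  have heigchar : ∀ w : EuclideanSpace ℝ (Fin n), A w = lam • w → w = ⟪v1, w⟫ • v1 := by
    intro w hw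
    set u : EuclideanSpace ℝ (Fin n) := w - ⟪v1, w⟫ • v1 with hudef
    have hperp : ⟪v1, u⟫ = 0 := by
      rw [hudef, inner_sub_right, real_inner_smul_right, hv1v1]
      ring
    have h1 : A u = mu • u := hrest u hperp
    have h2 : A u = lam • u := by
      rw [hudef, map_sub, map_smul, hw, heig]
      module
    have h3 : (mu - lam) • u = 0 := by
      rw [sub_smul, ← h1, ← h2, sub_self]
    have hu : u = 0 := (smul_eq_zero.mp h3).resolve_left hmlne
    rw [hudef, sub_eq_zero] at hu
    exact hu
  have hscale : ∀ (s : ℝ) (x : EuclideanSpace ℝ (Fin n)), 0 ≤ s → x ∈ L → s • x ∈ L := by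
    intro s x hs hx
    rw [hLiff] at hx ⊢
    rw [auxP_smul, norm_smul, Real.norm_eq_abs, abs_of_nonneg hs]
    have : (s • x) i0 = s * x i0 := rfl
    rw [this]
    exact mul_le_mul_of_nonneg_left hx hs
  constructor
  · intro hq
    by_contra hno
    have hv1ne0 : v1 ≠ 0 := by
      intro h0
      rw [h0, norm_zero] at hv1
      norm_num at hv1
    have hv1L : v1 ∉ L := fun h => hno ⟨v1, h, hv1ne0, heig⟩
    have hnegv1L : -v1 ∉ L := fun h =>
      hno ⟨-v1, h, neg_ne_zero.mpr hv1ne0, by rw [map_neg, heig, smul_neg]⟩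
    rw [hLiff] at hv1L hnegv1L
    set aa : ℝ := v1 i0 with haadef
    set bb : ℝ := ‖auxP i0 v1‖ with hbbdef
    have h1 : aa < bb := not_le.mp hv1L
    have h2 : -aa < bb := by
      have hPneg : ‖auxP i0 (-v1)‖ = bb := by
        have : (-v1 : EuclideanSpace ℝ (Fin n)) = (-1 : ℝ) • v1 := by module
        rw [this, auxP_smul, norm_smul]
        simp [hbbdef]
      have hnegi0 : (-v1 : EuclideanSpace ℝ (Fin n)) i0 = -aa := rfl
      rw [hPneg, hnegi0] at hnegv1L
      exact not_le.mp hnegv1L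
    have habs : |aa| < bb := abs_lt.mpr ⟨by linarith, h1⟩
    have hbb : 0 < bb := lt_of_le_of_lt (abs_nonneg aa) habs
    -- the unit vector uh in the hyperplane
    set uh : EuclideanSpace ℝ (Fin n) := bb⁻¹ • auxP i0 v1 with huhdef
    have huhnorm : ‖uh‖ = 1 := by
      rw [huhdef, norm_smul, Real.norm_eq_abs, abs_of_pos (inv_pos.mpr hbb), ← hbbdef]
      field_simp
    have huhi0 : uh i0 = 0 := by
      show bb⁻¹ * auxP i0 v1 i0 = 0
      rw [auxP_apply, if_pos rfl, mul_zero]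
    have hPuh : auxP i0 uh = uh := by rw [huhdef, auxP_smul, auxP_idem]
    set e0 : EuclideanSpace ℝ (Fin n) := EuclideanSpace.single i0 (1:ℝ) with he0def
    have he0norm : ‖e0‖ = 1 := by rw [he0def, EuclideanSpace.norm_single, norm_one]
    have he0i0 : e0 i0 = 1 := by rw [he0def, EuclideanSpace.single_apply, if_pos rfl]
    have hPe0 : auxP i0 e0 = 0 := by
      ext i
      rw [auxP_apply]
      split
      · rfl
      · rename_i hi
        simp [he0def, EuclideanSpace.single_apply, hi]
    have hv1e0 : ⟪v1, e0⟫ = aa := by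
      rw [aux_inner_split i0, he0i0, hPe0, inner_zero_right, mul_one, add_zero]
    have hv1uh : ⟪v1, uh⟫ = bb := by
      rw [huhdef, real_inner_smul_right]
      have hin : ⟪v1, auxP i0 v1⟫ = bb ^ 2 := by
        rw [aux_inner_split i0 v1 (auxP i0 v1), auxP_idem, auxP_apply, if_pos rfl, mul_zero,
          zero_add, real_inner_self_eq_norm_sq, hbbdef]
      rw [hin, pow_two, inv_mul_cancel_left₀ (ne_of_gt hbb)]
    have he0uh : ⟪e0, uh⟫ = 0 := by
      rw [aux_inner_split i0, huhi0, mul_zero, hPe0, inner_zero_left, add_zero]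
    have huhe0 : ⟪uh, e0⟫ = 0 := by rw [real_inner_comm]; exact he0uh
    -- choose the rotation parameters
    obtain ⟨c0, s0, hc0, hs0, hcs, hs0c0, hchord⟩ :
        ∃ c0 s0 : ℝ, 0 < c0 ∧ 0 < s0 ∧ c0 ^ 2 + s0 ^ 2 = 1 ∧ s0 < c0 ∧ |aa| * c0 < bb * s0 := by
      set ρ : ℝ := (|aa| / bb + 1) / 2 with hρdef
      have hρ0 : 0 < ρ := by positivity
      have h01 : |aa| / bb < 1 := (div_lt_one hbb).mpr habs
      have hρ1 : ρ < 1 := by rw [hρdef]; linarith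
      have hρa : |aa| / bb < ρ := by rw [hρdef]; linarith
      have hd2pos : (0:ℝ) < 1 + ρ ^ 2 := by positivity
      set d : ℝ := Real.sqrt (1 + ρ ^ 2) with hddef
      have hd : 0 < d := Real.sqrt_pos.mpr hd2pos
      have hd2 : d ^ 2 = 1 + ρ ^ 2 := Real.sq_sqrt hd2pos.le
      refine ⟨d⁻¹, ρ * d⁻¹, by positivity, by positivity, ?_, ?_, ?_⟩
      · have hdne : d ≠ 0 := ne_of_gt hd
        field_simp
        linarith [hd2]
      · have h3 : ρ * d⁻¹ < 1 * d⁻¹ := mul_lt_mul_of_pos_right hρ1 (inv_pos.mpr hd)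
        rwa [one_mul] at h3
      · have h3 : |aa| < ρ * bb := (div_lt_iff₀ hbb).mp hρa
        calc |aa| * d⁻¹ < (ρ * bb) * d⁻¹ := mul_lt_mul_of_pos_right h3 (inv_pos.mpr hd)
          _ = bb * (ρ * d⁻¹) := by ring
    set x : EuclideanSpace ℝ (Fin n) := c0 • e0 + s0 • uh with hxdef
    set y : EuclideanSpace ℝ (Fin n) := c0 • e0 + (-s0) • uh with hydef
    have hxnorm : ‖x‖ = 1 :=
      aux_norm_comb he0norm huhnorm (by rw [he0uh, mul_zero, add_zero]; exact hcs)
    have hynorm : ‖y‖ = 1 :=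
      aux_norm_comb he0norm huhnorm (by rw [he0uh, mul_zero, add_zero, neg_sq]; exact hcs)
    have he0e0 : ⟪e0, e0⟫ = 1 := by rw [real_inner_self_eq_norm_sq, he0norm]; norm_num
    have huhuh : ⟪uh, uh⟫ = 1 := by rw [real_inner_self_eq_norm_sq, huhnorm]; norm_num
    have hxy : ⟪x, y⟫ = c0 ^ 2 - s0 ^ 2 := by
      rw [hxdef, hydef]
      simp only [inner_add_left, inner_add_right, real_inner_smul_left, real_inner_smul_right,
        he0uh, huhe0, he0e0, huhuh]
      ring
    have hxylt : ⟪x, y⟫ < 1 := by rw [hxy]; exact (aux_lt_one hc0 hs0 hcs).2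
    have hxygt : -1 < ⟪x, y⟫ := by rw [hxy]; exact (aux_lt_one hc0 hs0 hcs).1
    have hyx : y ≠ x := by
      intro h
      have : ⟪x, y⟫ = 1 := by rw [h, real_inner_self_eq_norm_sq, hxnorm]; norm_num
      linarith
    have hyx' : y ≠ -x := by
      intro h
      have : ⟪x, y⟫ = -1 := by
        rw [h, inner_neg_right, real_inner_self_eq_norm_sq, hxnorm]
        norm_num
      linarith
    have hPx : auxP i0 x = s0 • uh := by
      rw [hxdef, auxP_add, auxP_smul, auxP_smul, hPe0, hPuh, smul_zero, zero_add]
    have hPy : auxP i0 y = (-s0) • uh := by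
      rw [hydef, auxP_add, auxP_smul, auxP_smul, hPe0, hPuh, smul_zero, zero_add]
    have hxi0 : x i0 = c0 := by
      show c0 * e0 i0 + s0 * uh i0 = c0
      rw [he0i0, huhi0, mul_one, mul_zero, add_zero]
    have hyi0 : y i0 = c0 := by
      show c0 * e0 i0 + (-s0) * uh i0 = c0
      rw [he0i0, huhi0, mul_one, mul_zero, add_zero]
    -- the geodesic stays in the set
    have hmem : ∀ s ∈ Set.Icc (0:ℝ) 1,
        geo x y s ∈ Metric.sphere (0 : EuclideanSpace ℝ (Fin n)) 1 ∩ interior L := by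
      intro s hs
      obtain ⟨a, b, ha, hb, hab, hid, hcomb⟩ := geo_coeff hxnorm hynorm hyx hyx' hs.1 hs.2
      constructor
      · rw [mem_sphere_zero_iff_norm, hcomb]
        exact aux_norm_comb hxnorm hynorm hid
      · rw [hIntEq, Set.mem_setOf_eq, hcomb]
        have hP : auxP i0 (a • x + b • y) = (a * s0 - b * s0) • uh := by
          rw [auxP_add, auxP_smul, auxP_smul, hPx, hPy]
          module
        have hi0v : (a • x + b • y) i0 = (a + b) * c0 := by
          show a * x i0 + b * y i0 = (a + b) * c0
          rw [hxi0, hyi0]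
          ring
        rw [hP, hi0v, norm_smul, huhnorm, mul_one, Real.norm_eq_abs]
        exact aux_abs_bound ha hb hab hs0 hs0c0
    have hp1 : ⟪v1, x⟫ = aa * c0 + bb * s0 := by
      rw [hxdef, inner_add_right, real_inner_smul_right, real_inner_smul_right, hv1e0, hv1uh]
      ring
    have hq1 : ⟪v1, y⟫ = aa * c0 - bb * s0 := by
      rw [hydef, inner_add_right, real_inner_smul_right, real_inner_smul_right, hv1e0, hv1uh]
      ring
    have hprod : ⟪v1, x⟫ * ⟪v1, y⟫ < 0 := by
      rw [hp1, hq1]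
      exact aux_prod_neg hchord hc0 hs0 hbb
    -- the continuous inner-product function along the geodesic
    set cxy : ℝ := ⟪x, y⟫ with hcxydef
    set θ' : ℝ := Real.arccos cxy with hθ'def
    set s' : ℝ := Real.sqrt (1 - cxy ^ 2) with hs'def
    have hs'pos : 0 < s' := Real.sqrt_pos.mpr (aux_one_sub_sq hxygt hxylt)
    set g : ℝ → ℝ := fun s =>
      (Real.cos (s * θ') - cxy * Real.sin (s * θ') / s') * ⟪v1, x⟫ +
        (Real.sin (s * θ') / s') * ⟪v1, y⟫ with hgdef
    have hg : ∀ s, ⟪v1, geo x y s⟫ = g s := by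
      intro s
      simp only [geo, inner_add_right, real_inner_smul_right, hgdef]
      rfl
    have hgc : Continuous g := by
      rw [hgdef]
      fun_prop
    have hg0 : g 0 = ⟪v1, x⟫ := by
      rw [hgdef]
      simp
    have hg1 : g 1 = ⟪v1, y⟫ := by
      rw [hgdef]
      simp only [one_mul, hθ'def, Real.cos_arccos hxygt.le hxylt.le, Real.sin_arccos, ← hs'def,
        ← hcxydef]
      rw [mul_div_assoc, div_self (ne_of_gt hs'pos)]
      ring
    obtain ⟨t0, ht0, hgt0⟩ : ∃ t0 ∈ Set.Icc (0:ℝ) 1, g t0 = 0 := by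
      rcases lt_trichotomy ⟪v1, x⟫ 0 with hneg | hzero | hpos'
      · have hypos : 0 < ⟪v1, y⟫ := aux_sign_neg hprod hneg
        have him := intermediate_value_Icc zero_le_one hgc.continuousOn
        have h0mem : (0:ℝ) ∈ Set.Icc (g 0) (g 1) := by
          rw [hg0, hg1]
          exact ⟨hneg.le, hypos.le⟩
        obtain ⟨t0, ht0, hgt0⟩ := him h0mem
        exact ⟨t0, ht0, hgt0⟩
      · rw [hzero] at hprod
        simp at hprod
      · have hyneg : ⟪v1, y⟫ < 0 := aux_sign_pos hprod hpos'
        have him := intermediate_value_Icc' zero_le_one hgc.continuousOn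
        have h0mem : (0:ℝ) ∈ Set.Icc (g 1) (g 0) := by
          rw [hg0, hg1]
          exact ⟨hyneg.le, hpos'.le⟩
        obtain ⟨t0, ht0, hgt0⟩ := him h0mem
        exact ⟨t0, ht0, hgt0⟩
    -- apply quasiconvexity to get the contradiction
    have hQC := hq (fun s => geo x y s)
      (Or.inl ⟨x, y, hxnorm, hynorm, hyx, hyx', fun s => rfl⟩) hmem t0 ht0
    simp only [geo_zero, geo_one hxnorm hynorm hyx hyx'] at hQC
    have hnt : ‖geo x y t0‖ = 1 := by
      have := (hmem t0 ht0).1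
      rwa [mem_sphere_zero_iff_norm] at this
    have hvt : ⟪v1, geo x y t0⟫ = 0 := by rw [hg t0]; exact hgt0
    have hfmid : ⟪A (geo x y t0), geo x y t0⟫ = mu := by
      rw [hquad, hnt, hvt]
      ring
    have hpx0 : ⟪v1, x⟫ ≠ 0 := by
      intro h
      rw [h] at hprod
      simp at hprod
    have hqy0 : ⟪v1, y⟫ ≠ 0 := by
      intro h
      rw [h] at hprod
      simp at hprod
    have hfx : ⟪A x, x⟫ < mu := by
      rw [hquad, hxnorm]
      exact aux_fx_lt hlt hpx0
    have hfy : ⟪A y, y⟫ < mu := by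
      rw [hquad, hynorm]
      exact aux_fx_lt hlt hqy0
    rw [hfmid] at hQC
    have hmax : max ⟪A x, x⟫ ⟪A y, y⟫ < mu := max_lt hfx hfy
    linarith
  · -- backward direction
    rintro ⟨w, hwL, hw0, hwEig⟩
    have hw := heigchar w hwEig
    set p : ℝ := ⟪v1, w⟫ with hpdef
    have hp0 : p ≠ 0 := by
      intro h
      apply hw0
      rw [hw, h, zero_smul]
    set ε : ℝ := |p|⁻¹ * p with hεdef
    have hε2 : ε ^ 2 = 1 := by
      have habs : |p| ^ 2 = p ^ 2 := sq_abs p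
      rw [hεdef, mul_pow, inv_pow, habs]
      field_simp
    set u : EuclideanSpace ℝ (Fin n) := |p|⁻¹ • w with hudef
    have huL : u ∈ L := hscale _ _ (by positivity) hwL
    have huv1 : u = ε • v1 := by
      rw [hudef, hεdef]
      nth_rewrite 1 [hw]
      rw [smul_smul, hpdef]
    have hunorm : ‖u‖ = 1 := by
      rw [huv1, norm_smul, hv1, mul_one, Real.norm_eq_abs, ← Real.sqrt_sq_eq_abs, hε2,
        Real.sqrt_one]
    have hune : u ≠ 0 := fun h => by simp [h] at hunorm
    have husq : ∀ z : EuclideanSpace ℝ (Fin n), ⟪v1, z⟫ ^ 2 = ⟪u, z⟫ ^ 2 := by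
      intro z
      rw [huv1, real_inner_smul_left, mul_pow, hε2, one_mul]
    intro γ hgeo hmem t ht
    have hpos : ∀ s', s' ∈ Set.Icc (0:ℝ) 1 → 0 < ⟪u, γ s'⟫ := by
      intro s' hs'
      have h1 := (hmem s' hs').2
      rw [hIntEq, Set.mem_setOf_eq] at h1
      exact aux_pos_inner ((hLiff u).mp huL) hune h1
    rcases hgeo with ⟨x, y, hx, hy, hyx, hyx', hγ⟩ | ⟨x, v, hx, hv, hxv, hγ⟩
    · -- arc case
      have hγ0 : γ 0 = x := by rw [hγ 0, geo_zero]
      have hγ1 : γ 1 = y := by rw [hγ 1, geo_one hx hy hyx hyx']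
      have hp1 : 0 < ⟪u, x⟫ := by
        have := hpos 0 ⟨le_refl 0, zero_le_one⟩
        rwa [hγ0] at this
      have hq1 : 0 < ⟪u, y⟫ := by
        have := hpos 1 ⟨zero_le_one, le_refl 1⟩
        rwa [hγ1] at this
      obtain ⟨a, b, ha, hb, hab, hid, hcomb⟩ := geo_coeff hx hy hyx hyx' ht.1 ht.2
      have hγt : γ t = a • x + b • y := by rw [hγ t, hcomb]
      have hval : ⟪u, γ t⟫ = a * ⟪u, x⟫ + b * ⟪u, y⟫ := by
        rw [hγt, inner_add_right, real_inner_smul_right, real_inner_smul_right]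
      have hnt : ‖γ t‖ = 1 := by
        have := (hmem t ht).1
        rwa [mem_sphere_zero_iff_norm] at this
      show ⟪A (γ t), γ t⟫ ≤ max ⟪A (γ 0), γ 0⟫ ⟪A (γ 1), γ 1⟫
      rw [hγ0, hγ1, hquad (γ t), hquad x, hquad y, hnt, hx, hy, husq, husq, husq, hval]
      set P1 : ℝ := ⟪u, x⟫ with hP1def
      set Q1 : ℝ := ⟪u, y⟫ with hQ1def
      clear_value P1 Q1
      exact aux_main_ineq mu lam a b P1 Q1 hlt ha hb hab hp1 hq1
    · -- great circle case : impossible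
      exfalso
      have h0 := hpos 0 ⟨le_refl 0, zero_le_one⟩
      have h1 := hpos 1 ⟨zero_le_one, le_refl 1⟩
      have hγ0 : γ 0 = x := by
        rw [hγ 0]
        simp
      have hγ1 : γ 1 = -x := by
        rw [hγ 1]
        simp [Real.cos_pi, Real.sin_pi]
      rw [hγ0] at h0
      rw [hγ1, inner_neg_right] at h1
      linarith
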